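/- arXiv:1512.06992 — 2 statements merged into one kernel-verified Lean document; each statement's English description precedes it below -/
import Mathlib

section
/- Let k be a natural number, h : {0,1}^k → ℝ a contingency table, j ∈ {0,1}^k, and let p = ‖j‖_1 − 1 (so 2^{p+1} indices γ satisfy γ ⪯ j). Let S ⊆ {0,1}^k be a finite set containing 0 and all γ ⪯ j, let ε > 0, t > 0, δ ∈ (0,1). Let (X_γ)_{γ ∈ S} be independent Laplace random variables with scale 2|S|·ε^{−1}·2^{−k/2}, and define the noisy Fourier coefficients z_γ = ⟨f^γ, h⟩ + X_γ for γ ≠ 0 and z_{0} = ⟨f^{0}, h⟩ + X_{0} + 4t|S|²·ε^{−1}·2^{−k/2}, and the perturbed marginal table h^j = Σ_{γ ⪯ j} z_γ · (C^j f^γ). Then with probability at least 1 − δ, ‖C^j h − h^j‖_1 ≤ (4|S|/ε)·( 2^{p}·ln(|S|/δ) + t·|S| ). -/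
open MeasureTheory Finset

/-- The Laplace distribution on `ℝ` with scale `b`. -/
noncomputable def laplaceMeasure (b : ℝ) : Measure ℝ :=
  MeasureTheory.volume.withDensity fun x => ENNReal.ofReal (1 / (2 * b) * Real.exp (-|x| / b))

/-- `⟨γ,j⟩ = Σ_i γ_i j_i` on the Boolean hypercube `{0,1}^k`. -/
def cubeInner {k : ℕ} (γ j : Fin k → Bool) : ℕ :=
  (Finset.univ.filter fun i => γ i = true ∧ j i = true).card

/-- The Fourier basis vector `f^j`, with `f^j_γ = (−1)^{⟨γ,j⟩}·2^{−k/2}`. -/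
noncomputable def cubeFourier {k : ℕ} (j γ : Fin k → Bool) : ℝ :=
  (-1 : ℝ) ^ cubeInner γ j * (2 : ℝ) ^ (-(k : ℝ) / 2)

/-- The inner product of two tables, `⟨f,h⟩ = Σ_η f_η h_η`. -/
noncomputable def tdot {k : ℕ} (f h : (Fin k → Bool) → ℝ) : ℝ := ∑ η, f η * h η

/-- Coordinatewise product (meet) `η ∧ j` on `{0,1}^k`. -/
def meet {k : ℕ} (η j : Fin k → Bool) : Fin k → Bool := fun i => η i && j i

/-- The marginalisation operator: `(C^j h)_γ = Σ_{η : η ∧ j = γ} h_η`. -/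
noncomputable def proj {k : ℕ} (j : Fin k → Bool) (h : (Fin k → Bool) → ℝ)
    (γ : Fin k → Bool) : ℝ :=
  ∑ η ∈ Finset.univ.filter (fun η => meet η j = γ), h η

/-- `γ ⪯ j` iff `γ_i ≤ j_i` for all `i`. -/
def cubeLe {k : ℕ} (γ j : Fin k → Bool) : Prop := ∀ i, γ i ≤ j i

instance {k : ℕ} (j : Fin k → Bool) : DecidablePred (fun γ => cubeLe γ j) :=
  fun γ => inferInstanceAs (Decidable (∀ i, γ i ≤ j i))

/-- The noisy Fourier coefficient `z_γ = ⟨f^γ, h⟩ + X_γ`, incremented for `γ = 0` by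
the non-negativity shift `4t|S|²·ε⁻¹·2^{−k/2}`. -/
noncomputable def noisyCoef {k : ℕ} (S : Finset (Fin k → Bool))
    (h : (Fin k → Bool) → ℝ) (ε t : ℝ) (x : ↥S → ℝ) (γ : ↥S) : ℝ :=
  tdot (cubeFourier γ.1) h + x γ +
    if γ.1 = (fun _ => false) then
      4 * t * (S.card : ℝ) ^ 2 / ε * (2 : ℝ) ^ (-(k : ℝ) / 2) else 0

/-- The perturbed marginal table `h^j = Σ_{γ' ⪯ j} z_{γ'} · (C^j f^{γ'})`. -/
noncomputable def perturbedMarginal {k : ℕ} (S : Finset (Fin k → Bool))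
    (h : (Fin k → Bool) → ℝ) (j : Fin k → Bool)
    (hSj : ∀ γ, cubeLe γ j → γ ∈ S) (ε t : ℝ) (x : ↥S → ℝ)
    (γ : Fin k → Bool) : ℝ :=
  ∑ γ' ∈ (Finset.univ.filter fun γ' => cubeLe γ' j).attach,
    noisyCoef S h ε t x ⟨γ'.1, hSj γ'.1 (Finset.mem_filter.mp γ'.2).2⟩ *
      proj j (cubeFourier γ'.1) γ

lemma sign_prod {k : ℕ} (η γ : Fin k → Bool) :
    (-1:ℝ) ^ cubeInner η γ = ∏ i, (if η i = true ∧ γ i = true then (-1:ℝ) else 1) := by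
  rw [Finset.prod_ite, Finset.prod_const, Finset.prod_const, one_pow, mul_one, cubeInner]

lemma kernel_sum {k : ℕ} (η η' : Fin k → Bool) :
    ∑ γ : Fin k → Bool, (-1:ℝ) ^ cubeInner η γ * (-1:ℝ) ^ cubeInner η' γ
      = if η = η' then (2:ℝ)^k else 0 := by
  have : ∀ γ : Fin k → Bool, (-1:ℝ) ^ cubeInner η γ * (-1:ℝ) ^ cubeInner η' γ
      = ∏ i, ((if η i = true ∧ γ i = true then (-1:ℝ) else 1) *
              (if η' i = true ∧ γ i = true then (-1:ℝ) else 1)) := by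
    intro γ
    rw [sign_prod, sign_prod, ← Finset.prod_mul_distrib]
  simp_rw [this]
  have hps := Finset.prod_univ_sum (κ := fun _ : Fin k => Bool) (t := fun _ => (univ : Finset Bool))
    (f := fun i b => (if η i = true ∧ b = true then (-1:ℝ) else 1) *
      (if η' i = true ∧ b = true then (-1:ℝ) else 1))
  rw [Fintype.piFinset_univ] at hps
  rw [← hps]
  have hfac : ∀ i : Fin k,
      (∑ b : Bool, (if η i = true ∧ b = true then (-1:ℝ) else 1) *
        (if η' i = true ∧ b = true then (-1:ℝ) else 1)) = if η i = η' i then 2 else 0 := by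
    intro i
    cases hη : η i <;> cases hη' : η' i <;> simp [Fintype.sum_bool] <;> norm_num
  simp_rw [hfac]
  by_cases hee : η = η'
  · simp [hee]
  · obtain ⟨i, hi⟩ := Function.ne_iff.mp hee
    rw [if_neg hee]
    exact Finset.prod_eq_zero (mem_univ i) (by simp [hi])

lemma two_rpow_half_sq (k : ℕ) : (2:ℝ) ^ (-(k:ℝ)/2) * (2:ℝ) ^ (-(k:ℝ)/2) = ((2:ℝ)^k)⁻¹ := by
  rw [← Real.rpow_add two_pos]
  rw [show -(k:ℝ)/2 + -(k:ℝ)/2 = -(k:ℝ) by ring]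
  rw [Real.rpow_neg (by norm_num), Real.rpow_natCast]

lemma inversion {k : ℕ} (h : (Fin k → Bool) → ℝ) (η : Fin k → Bool) :
    ∑ γ : Fin k → Bool, tdot (cubeFourier γ) h * cubeFourier γ η = h η := by
  unfold tdot cubeFourier
  have key : ∀ γ : Fin k → Bool,
      (∑ η', ((-1:ℝ) ^ cubeInner η' γ * (2:ℝ) ^ (-(k:ℝ)/2)) * h η') *
        ((-1:ℝ) ^ cubeInner η γ * (2:ℝ) ^ (-(k:ℝ)/2)) =
      ∑ η', ((-1:ℝ) ^ cubeInner η γ * (-1:ℝ) ^ cubeInner η' γ) * (((2:ℝ)^k)⁻¹ * h η') := by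
    intro γ
    rw [Finset.sum_mul]
    refine Finset.sum_congr rfl fun η' _ => ?_
    rw [← two_rpow_half_sq k]; ring
  simp_rw [key]
  rw [Finset.sum_comm]
  have key2 : ∀ η' : Fin k → Bool,
      (∑ γ : Fin k → Bool, ((-1:ℝ) ^ cubeInner η γ * (-1:ℝ) ^ cubeInner η' γ) *
        (((2:ℝ)^k)⁻¹ * h η')) = if η' = η then h η' else 0 := by
    intro η'
    rw [← Finset.sum_mul, kernel_sum]
    by_cases hee : η = η'
    · rw [if_pos hee, if_pos hee.symm, ← mul_assoc,
        mul_inv_cancel₀ (a := (2:ℝ)^k) (by positivity), one_mul]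
    · rw [if_neg hee, if_neg (Ne.symm hee), zero_mul]
  simp_rw [key2]
  simp

lemma vanish {k : ℕ} {γ' j : Fin k → Bool} (hle : ¬ cubeLe γ' j) (β : Fin k → Bool) :
    proj j (cubeFourier γ') β = 0 := by
  unfold proj cubeFourier
  simp only [cubeLe, not_forall] at hle
  obtain ⟨i₀, hi₀⟩ := hle
  have hγ' : γ' i₀ = true := by
    cases hg : γ' i₀ <;> simp [hg] at hi₀ ⊢
  have hj : j i₀ = false := by
    cases hg : j i₀ <;> simp [hg, hγ'] at hi₀ ⊢
  refine Finset.sum_involution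
    (fun η _ => Function.update η i₀ (!η i₀)) ?_ ?_ ?_ ?_
  · intro η hη
    have hsign : (-1:ℝ) ^ cubeInner (Function.update η i₀ (!η i₀)) γ'
        = -((-1:ℝ) ^ cubeInner η γ') := by
      have A := Finset.mul_prod_erase Finset.univ
        (fun i => if Function.update η i₀ (!η i₀) i = true ∧ γ' i = true then (-1:ℝ) else 1)
        (Finset.mem_univ i₀)
      have B := Finset.mul_prod_erase Finset.univ
        (fun i => if η i = true ∧ γ' i = true then (-1:ℝ) else 1) (Finset.mem_univ i₀)
      have hPQ : (∏ x ∈ Finset.univ.erase i₀,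
          if Function.update η i₀ (!η i₀) x = true ∧ γ' x = true then (-1:ℝ) else 1)
          = ∏ x ∈ Finset.univ.erase i₀, if η x = true ∧ γ' x = true then (-1:ℝ) else 1 := by
        refine Finset.prod_congr rfl fun i hi => ?_
        rw [Function.update_of_ne (Finset.ne_of_mem_erase hi)]
      rw [sign_prod, sign_prod, ← A, ← B, hPQ]
      simp only [Function.update_self, hγ', and_true]
      cases hb : η i₀ <;> simp <;> ring
    rw [hsign]; ring
  · intro η hη _
    intro hcontra
    have := congrFun hcontra i₀
    simp at this
  · intro η hη
    simp only [Finset.mem_filter, Finset.mem_univ, true_and] at hη ⊢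
    rw [← hη]
    funext i
    by_cases hii : i = i₀
    · subst hii; simp [meet, hj]
    · simp [meet, Function.update_of_ne hii]
  · intro η hη
    funext i
    by_cases hii : i = i₀
    · subst hii; simp
    · simp [Function.update_of_ne hii]

lemma proj_expand {k : ℕ} (j : Fin k → Bool) (h : (Fin k → Bool) → ℝ) (β : Fin k → Bool) :
    proj j h β = ∑ γ' ∈ Finset.univ.filter (fun γ' => cubeLe γ' j),
      tdot (cubeFourier γ') h * proj j (cubeFourier γ') β := by
  rw [Finset.sum_filter]
  have : ∀ γ' : Fin k → Bool,
      (if cubeLe γ' j then tdot (cubeFourier γ') h * proj j (cubeFourier γ') β else 0)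
      = tdot (cubeFourier γ') h * proj j (cubeFourier γ') β := by
    intro γ'
    by_cases hle : cubeLe γ' j
    · rw [if_pos hle]
    · rw [if_neg hle, vanish hle, mul_zero]
  simp_rw [this]
  unfold proj
  simp_rw [Finset.mul_sum]
  rw [Finset.sum_comm]
  refine Finset.sum_congr rfl fun η _ => ?_
  exact (inversion h η).symm

lemma card_cubeLe {k : ℕ} (j : Fin k → Bool) :
    (Finset.univ.filter fun γ => cubeLe γ j).card
      = 2 ^ (Finset.univ.filter fun i => j i = true).card := by
  have hset : (Finset.univ.filter fun γ => cubeLe γ j)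
      = Fintype.piFinset (fun i => if j i = true then (univ : Finset Bool) else {false}) := by
    ext γ
    simp only [Finset.mem_filter, Finset.mem_univ, true_and, Fintype.mem_piFinset]
    constructor
    · intro hle i
      by_cases hj : j i = true
      · simp [hj]
      · have := hle i
        simp only [Bool.not_eq_true] at hj
        rw [hj] at this
        simp [hj, Bool.eq_false_of_le_false this]
    · intro hmem i
      by_cases hj : j i = true
      · simp [hj]
      · have := hmem i
        simp only [Bool.not_eq_true] at hj
        simp [hj] at this
        simp [this, hj]
  rw [hset, Fintype.card_piFinset]
  have : ∀ i : Fin k, ((if j i = true then (univ : Finset Bool) else {false}).card)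
      = if j i = true then 2 else 1 := by
    intro i; by_cases hj : j i = true <;> simp [hj]
  simp_rw [this]
  rw [Finset.prod_ite, Finset.prod_const, Finset.prod_const, one_pow, mul_one]

lemma fiber_sum {k : ℕ} (j : Fin k → Bool) :
    ∑ β ∈ Finset.univ.filter (fun γ => cubeLe γ j),
      (Finset.univ.filter (fun η => meet η j = β)).card = 2 ^ k := by
  have hmem : ∀ η : Fin k → Bool, η ∈ (univ : Finset (Fin k → Bool)) →
      meet η j ∈ Finset.univ.filter (fun γ => cubeLe γ j) := by
    intro η _
    simp only [Finset.mem_filter, Finset.mem_univ, true_and]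
    intro i
    exact Bool.and_le_right (η i) (j i)
  have := Finset.card_eq_sum_card_fiberwise hmem
  rw [← this]
  simp [Fintype.card_fun]

lemma abs_proj_le {k : ℕ} (j γ' β : Fin k → Bool) :
    |proj j (cubeFourier γ') β| ≤
      ((Finset.univ.filter (fun η => meet η j = β)).card : ℝ) * (2:ℝ) ^ (-(k:ℝ)/2) := by
  unfold proj cubeFourier
  refine (Finset.abs_sum_le_sum_abs _ _).trans ?_
  have : ∀ η : Fin k → Bool, |(-1:ℝ) ^ cubeInner η γ' * (2:ℝ) ^ (-(k:ℝ)/2)|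
      = (2:ℝ) ^ (-(k:ℝ)/2) := by
    intro η
    rw [abs_mul, abs_pow, abs_neg, abs_one, one_pow, one_mul,
      abs_of_pos (Real.rpow_pos_of_pos two_pos _)]
  simp_rw [this]
  rw [Finset.sum_const, nsmul_eq_mul]

lemma det_bound {k : ℕ} (h : (Fin k → Bool) → ℝ) (j : Fin k → Bool) (p : ℕ)
    (hp : (Finset.univ.filter fun i => j i = true).card = p + 1)
    (S : Finset (Fin k → Bool)) (hSj : ∀ γ, cubeLe γ j → γ ∈ S)
    (ε t : ℝ) (hε : 0 < ε) (ht : 0 < t) (L : ℝ) (hL : 0 ≤ L)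
    (hScard : 1 ≤ S.card)
    (x : ↥S → ℝ)
    (hx : ∀ γ : ↥S, |x γ| ≤ 2 * S.card / ε * (2:ℝ) ^ (-(k:ℝ)/2) * L) :
    ∑ γ ∈ Finset.univ.filter (fun γ => cubeLe γ j),
        |proj j h γ - perturbedMarginal S h j hSj ε t x γ| ≤
      4 * S.card / ε * ((2:ℝ)^p * L + t * S.card) := by
  set R : ℝ := (2:ℝ) ^ (-(k:ℝ)/2) with hR
  have hRpos : 0 < R := Real.rpow_pos_of_pos two_pos _
  set B : Finset (Fin k → Bool) := Finset.univ.filter (fun γ => cubeLe γ j) with hB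
  set shift : ℝ := 4 * t * (S.card : ℝ) ^ 2 / ε * R with hshift
  have hshift_nonneg : 0 ≤ shift := by positivity
  set w : ↥B → ℝ := fun γ' =>
    |x ⟨γ'.1, hSj γ'.1 (Finset.mem_filter.mp γ'.2).2⟩| +
      (if γ'.1 = (fun _ => false) then shift else 0) with hw
  -- Step 1: pointwise bound
  have step1 : ∀ β, |proj j h β - perturbedMarginal S h j hSj ε t x β| ≤
      (∑ γ' ∈ B.attach, w γ') *
        (((Finset.univ.filter (fun η => meet η j = β)).card : ℝ) * R) := by
    intro β
    have hdiff : proj j h β - perturbedMarginal S h j hSj ε t x β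
        = ∑ γ' ∈ B.attach,
          (-(x ⟨γ'.1, hSj γ'.1 (Finset.mem_filter.mp γ'.2).2⟩ +
            (if γ'.1 = (fun _ => false) then shift else 0))) *
              proj j (cubeFourier γ'.1) β := by
      rw [proj_expand j h β, ← Finset.sum_attach B
        (fun γ' => tdot (cubeFourier γ') h * proj j (cubeFourier γ') β)]
      unfold perturbedMarginal noisyCoef
      rw [← Finset.sum_sub_distrib]
      refine Finset.sum_congr rfl fun γ' _ => ?_
      rw [hshift]
      ring
    rw [hdiff]
    refine (Finset.abs_sum_le_sum_abs _ _).trans ?_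
    rw [Finset.sum_mul]
    refine Finset.sum_le_sum fun γ' _ => ?_
    rw [abs_mul, abs_neg]
    have hite : (0:ℝ) ≤ if γ'.1 = (fun _ => false) then shift else 0 := by
      by_cases hz : γ'.1 = (fun _ => false) <;> simp [hz, hshift_nonneg]
    refine mul_le_mul ?_ (abs_proj_le j γ'.1 β) (abs_nonneg _) ?_
    · rw [hw]
      exact (abs_add_le _ _).trans (le_of_eq (by rw [abs_of_nonneg hite]))
    · rw [hw]
      exact add_nonneg (abs_nonneg _) hite
  -- Step 2: sum over β
  have step2 : ∑ β ∈ B, |proj j h β - perturbedMarginal S h j hSj ε t x β| ≤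
      (∑ γ' ∈ B.attach, w γ') * ((2:ℝ)^k * R) := by
    refine (Finset.sum_le_sum fun β _ => step1 β).trans ?_
    rw [← Finset.mul_sum]
    have : ∑ β ∈ B, (((Finset.univ.filter (fun η => meet η j = β)).card : ℝ) * R)
        = (2:ℝ)^k * R := by
      rw [← Finset.sum_mul]
      congr 1
      rw [← Nat.cast_sum, hB, fiber_sum j]
      push_cast; ring
    rw [this]
  -- Step 3: bound the weight sum
  have step3 : ∑ γ' ∈ B.attach, w γ' ≤
      (2:ℝ)^(p+1) * (2 * S.card / ε * R * L) + shift := by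
    rw [hw]
    rw [Finset.sum_add_distrib]
    have h1 : ∑ γ' ∈ B.attach,
        |x ⟨γ'.1, hSj γ'.1 (Finset.mem_filter.mp γ'.2).2⟩| ≤
        (2:ℝ)^(p+1) * (2 * S.card / ε * R * L) := by
      refine (Finset.sum_le_sum fun γ' _ => hx _).trans ?_
      rw [Finset.sum_const, nsmul_eq_mul, Finset.card_attach, hB, card_cubeLe j, hp]
      push_cast; ring_nf; rfl
    have h2 : ∑ γ' ∈ B.attach, (if γ'.1 = (fun _ => false) then shift else 0) = shift := by
      rw [Finset.sum_attach B (fun γ' => if γ' = (fun _ => false) then shift else 0),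
        Finset.sum_ite_eq' B (fun _ => false) (fun _ => shift)]
      rw [if_pos]
      simp only [hB, Finset.mem_filter, Finset.mem_univ, true_and]
      intro i
      exact Bool.false_le (j i)
    rw [h2]
    exact add_le_add h1 le_rfl
  -- Conclude
  refine step2.trans ?_
  have hfinal : ((2:ℝ)^(p+1) * (2 * S.card / ε * R * L) + shift) * ((2:ℝ)^k * R)
      = 4 * S.card / ε * ((2:ℝ)^p * L + t * S.card) := by
    have hRR : R * R = ((2:ℝ)^k)⁻¹ := two_rpow_half_sq k
    have h2k : (2:ℝ)^k ≠ 0 := by positivity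
    rw [hshift]
    calc ((2:ℝ)^(p+1) * (2 * S.card / ε * R * L) + 4 * t * (S.card:ℝ)^2 / ε * R) * ((2:ℝ)^k * R)
        = ((2:ℝ)^(p+1) * (2 * S.card / ε * L) + 4 * t * (S.card:ℝ)^2 / ε) * ((2:ℝ)^k * (R * R)) := by
          ring
      _ = (2:ℝ)^(p+1) * (2 * S.card / ε * L) + 4 * t * (S.card:ℝ)^2 / ε := by
          rw [hRR, mul_inv_cancel₀ h2k, mul_one]
      _ = 4 * S.card / ε * ((2:ℝ)^p * L + t * S.card) := by
          rw [pow_succ]; ring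
  calc (∑ γ' ∈ B.attach, w γ') * ((2:ℝ)^k * R)
      ≤ ((2:ℝ)^(p+1) * (2 * S.card / ε * R * L) + shift) * ((2:ℝ)^k * R) := by
        refine mul_le_mul_of_nonneg_right step3 (by positivity)
    _ = _ := hfinal

instance laplace_sigmaFinite (b : ℝ) : SigmaFinite (laplaceMeasure b) := by
  unfold laplaceMeasure; infer_instance

lemma laplace_Icc (b L : ℝ) (hb : 0 < b) (hL : 0 ≤ L) :
    laplaceMeasure b (Set.Icc (-(b*L)) (b*L)) = ENNReal.ofReal (1 - Real.exp (-L)) := by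
  set c : ℝ := b * L with hc
  have hc0 : 0 ≤ c := by positivity
  have hcont : Continuous fun x : ℝ => 1 / (2 * b) * Real.exp (-|x| / b) :=
    continuous_const.mul ((continuous_abs.neg.div_const b).rexp)
  have hnn : ∀ x : ℝ, 0 ≤ 1 / (2 * b) * Real.exp (-|x| / b) := fun x => by positivity
  rw [laplaceMeasure, withDensity_apply _ measurableSet_Icc,
    ← ofReal_integral_eq_lintegral_ofReal
      (hcont.integrableOn_Icc) (Filter.Eventually.of_forall hnn)]
  congr 1
  have hIcc : ∫ x in Set.Icc (-c) c, 1 / (2 * b) * Real.exp (-|x| / b)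
      = ∫ x in (-c)..c, 1 / (2 * b) * Real.exp (-|x| / b) := by
    rw [intervalIntegral.integral_of_le (by linarith), integral_Icc_eq_integral_Ioc]
  rw [hIcc]
  have hii : ∀ a₁ a₂ : ℝ, IntervalIntegrable (fun x => 1 / (2 * b) * Real.exp (-|x| / b))
      volume a₁ a₂ := fun a₁ a₂ => hcont.intervalIntegrable a₁ a₂
  rw [← intervalIntegral.integral_add_adjacent_intervals (hii (-c) 0) (hii 0 c)]
  have hright : ∫ x in (0:ℝ)..c, 1 / (2 * b) * Real.exp (-|x| / b)
      = (1 - Real.exp (-L)) / 2 := by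
    have hcongr : ∫ x in (0:ℝ)..c, 1 / (2 * b) * Real.exp (-|x| / b)
        = ∫ x in (0:ℝ)..c, 1 / (2 * b) * Real.exp (-x / b) := by
      refine intervalIntegral.integral_congr fun x hx => ?_
      rw [Set.uIcc_of_le hc0] at hx
      rw [abs_of_nonneg hx.1]
    rw [hcongr]
    have hderiv : ∀ x ∈ Set.uIcc (0:ℝ) c,
        HasDerivAt (fun y => -(1/2) * Real.exp (-y / b))
          (1 / (2 * b) * Real.exp (-x / b)) x := by
      intro x _
      have h1 : HasDerivAt (fun y : ℝ => -y / b) (-1 / b) x := by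
        simpa using ((hasDerivAt_id x).neg.div_const b)
      have h2 := (h1.exp).const_mul (-(1/2) : ℝ)
      exact h2.congr_deriv (by ring)
    rw [intervalIntegral.integral_eq_sub_of_hasDerivAt hderiv
      ((continuous_const.mul ((continuous_id.neg.div_const b).rexp)).intervalIntegrable 0 c)]
    have : c / b = L := by rw [hc]; field_simp
    simp [neg_div, this]
    ring
  have hleft : ∫ x in (-c)..(0:ℝ), 1 / (2 * b) * Real.exp (-|x| / b)
      = (1 - Real.exp (-L)) / 2 := by
    have hcongr : ∫ x in (-c)..(0:ℝ), 1 / (2 * b) * Real.exp (-|x| / b)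
        = ∫ x in (-c)..(0:ℝ), 1 / (2 * b) * Real.exp (x / b) := by
      refine intervalIntegral.integral_congr fun x hx => ?_
      rw [Set.uIcc_of_le (by linarith : -c ≤ 0)] at hx
      rw [abs_of_nonpos hx.2, neg_neg]
    rw [hcongr]
    have hderiv : ∀ x ∈ Set.uIcc (-c) (0:ℝ),
        HasDerivAt (fun y => (1/2) * Real.exp (y / b))
          (1 / (2 * b) * Real.exp (x / b)) x := by
      intro x _
      have h1 : HasDerivAt (fun y : ℝ => y / b) (1 / b) x := by
        simpa using ((hasDerivAt_id x).div_const b)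
      have h2 := (h1.exp).const_mul ((1/2) : ℝ)
      exact h2.congr_deriv (by ring)
    rw [intervalIntegral.integral_eq_sub_of_hasDerivAt hderiv
      ((continuous_const.mul ((continuous_id.div_const b).rexp)).intervalIntegrable (-c) 0)]
    have : -c / b = -L := by rw [hc]; field_simp
    simp [this]
    ring
  rw [hleft, hright]
  ring

/-- Utility of the Fourier-domain Laplace mechanism: with `p = ‖j‖₁ − 1`, `S ∋ 0`
containing all `γ ⪯ j`, independent Laplace noise of scale `2|S|·ε⁻¹·2^{−k/2}` and
the shift `4t|S|²·ε⁻¹·2^{−k/2}` on `z_0`, with probability at least `1 − δ` the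
perturbed marginal satisfies
`‖C^j h − h^j‖₁ ≤ (4|S|/ε)·(2^p·ln(|S|/δ) + t·|S|)`. -/
theorem stmt_11 (k : ℕ) (h : (Fin k → Bool) → ℝ) (j : Fin k → Bool) (p : ℕ)
    (hp : (Finset.univ.filter fun i => j i = true).card = p + 1)
    (S : Finset (Fin k → Bool)) (hS0 : (fun _ => false) ∈ S)
    (hSj : ∀ γ, cubeLe γ j → γ ∈ S)
    (ε t δ : ℝ) (hε : 0 < ε) (ht : 0 < t) (hδ : δ ∈ Set.Ioo (0 : ℝ) 1)
    (P : Measure (↥S → ℝ))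
    (hP : P = Measure.pi fun _ : ↥S =>
      laplaceMeasure (2 * S.card / ε * (2 : ℝ) ^ (-(k : ℝ) / 2))) :
    ENNReal.ofReal (1 - δ) ≤
      P {x | ∑ γ ∈ Finset.univ.filter (fun γ => cubeLe γ j),
          |proj j h γ - perturbedMarginal S h j hSj ε t x γ| ≤
        4 * S.card / ε *
          ((2 : ℝ) ^ p * Real.log (S.card / δ) + t * S.card)} := by
  obtain ⟨hδ0, hδ1⟩ := hδ
  have hS1 : 1 ≤ S.card := Finset.card_pos.mpr ⟨_, hS0⟩
  have hSpos : (0:ℝ) < S.card := by exact_mod_cast hS1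
  set b : ℝ := 2 * S.card / ε * (2:ℝ) ^ (-(k:ℝ)/2) with hb
  have hbpos : 0 < b := by positivity
  set L : ℝ := Real.log (S.card / δ) with hLdef
  have hSδpos : (0:ℝ) < (S.card:ℝ) / δ := by positivity
  have hSδ : 1 ≤ (S.card:ℝ) / δ := by
    rw [le_div_iff₀ hδ0]
    have : (1:ℝ) ≤ (S.card:ℝ) := by exact_mod_cast hS1
    nlinarith
  have hLnn : 0 ≤ L := Real.log_nonneg hSδ
  have hsub : (Set.univ.pi fun _ : ↥S => Set.Icc (-(b*L)) (b*L)) ⊆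
      {x | ∑ γ ∈ Finset.univ.filter (fun γ => cubeLe γ j),
          |proj j h γ - perturbedMarginal S h j hSj ε t x γ| ≤
        4 * S.card / ε * ((2 : ℝ) ^ p * Real.log (S.card / δ) + t * S.card)} := by
    intro x hx
    simp only [Set.mem_setOf_eq]
    refine det_bound h j p hp S hSj ε t hε ht L hLnn hS1 x fun γ => ?_
    have := hx γ (Set.mem_univ γ)
    rw [← hb]
    exact abs_le.mpr ⟨this.1, this.2⟩
  refine le_trans ?_ (measure_mono hsub)
  rw [hP, Measure.pi_pi]
  have hone : laplaceMeasure b (Set.Icc (-(b*L)) (b*L))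
      = ENNReal.ofReal (1 - δ / S.card) := by
    rw [laplace_Icc b L hbpos hLnn]
    congr 1
    rw [hLdef, ← Real.log_inv, Real.exp_log (by positivity), inv_div]
  simp_rw [hone]
  rw [Finset.prod_const, Finset.card_univ, Fintype.card_coe]
  have hnonneg : 0 ≤ 1 - δ / S.card := by
    have h1S : (1:ℝ) ≤ (S.card:ℝ) := by exact_mod_cast hS1
    have : δ / S.card ≤ δ := by
      rw [div_le_iff₀ hSpos]
      nlinarith
    linarith
  rw [← ENNReal.ofReal_pow hnonneg]
  refine ENNReal.ofReal_le_ofReal ?_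
  have hber := one_add_mul_le_pow (a := -(δ / S.card)) (by nlinarith [div_nonneg hδ0.le hSpos.le]) S.card
  have heq : 1 + (S.card : ℝ) * -(δ / S.card) = 1 - δ := by
    field_simp
    ring
  rw [heq] at hber
  calc (1 - δ : ℝ) ≤ (1 + -(δ / S.card)) ^ S.card := hber
    _ = (1 - δ / S.card) ^ S.card := by ring_nf
end

section
/- Let b > 0, let n > 0 and let a ∈ [0, n]. Let G(u) = (1/2)·exp(−u/b) for u ≥ 0 and G(u) = 1 − (1/2)·exp(u/b) for u < 0 (the upper tail function of the Laplace distribution with scale b, i.e. G(u) = Pr[Y > u] for Y Laplace with scale b). Then ∫_0^n G(z − a) dz + (n/2)·exp((a − n)/b) = a + (b/2)·exp(−a/b) + ((n − b)/2)·exp((a − n)/b). -/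
lemma exp_int_aux (b c d e : ℝ) (hb : b ≠ 0) :
    ∫ z in c..d, Real.exp ((z + e) / b)
      = b * (Real.exp ((d + e) / b) - Real.exp ((c + e) / b)) := by
  have h : (fun z => Real.exp ((z + e) / b)) = fun z => Real.exp ((z + e) * b⁻¹) := by
    simp [div_eq_mul_inv]
  rw [h, intervalIntegral.integral_comp_add_right (fun x => Real.exp (x * b⁻¹)) e,
    intervalIntegral.integral_comp_mul_right Real.exp (inv_ne_zero hb),
    integral_exp]
  field_simp
  rw [smul_eq_mul]

/-- Let `b > 0`, `n > 0`, `a ∈ [0,n]`, and let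
`G(u) = (1/2)·exp(−u/b)` for `u ≥ 0` and `G(u) = 1 − (1/2)·exp(u/b)` for `u < 0`
(the upper tail function of the Laplace distribution with scale `b`).  Then
`∫₀ⁿ G(z−a) dz + (n/2)·exp((a−n)/b) = a + (b/2)·exp(−a/b) + ((n−b)/2)·exp((a−n)/b)`. -/
theorem stmt_19 (b n a : ℝ) (hb : 0 < b) (hn : 0 < n) (ha : a ∈ Set.Icc 0 n)
    (G : ℝ → ℝ)
    (hG : ∀ u : ℝ, G u =
      if 0 ≤ u then 1 / 2 * Real.exp (-u / b) else 1 - 1 / 2 * Real.exp (u / b)) :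
    (∫ z in (0 : ℝ)..n, G (z - a)) + n / 2 * Real.exp ((a - n) / b) =
      a + b / 2 * Real.exp (-a / b) + (n - b) / 2 * Real.exp ((a - n) / b) := by
  obtain ⟨ha0, han⟩ := ha
  have hbne : b ≠ 0 := ne_of_gt hb
  have heq1 : Set.EqOn (fun z => G (z - a)) (fun z => 1 - 1 / 2 * Real.exp ((z - a) / b))
      (Set.uIcc 0 a) := by
    intro z hz
    rw [Set.uIcc_of_le ha0] at hz
    show G (z - a) = _
    rw [hG]
    rcases lt_or_eq_of_le hz.2 with h | h
    · rw [if_neg (by linarith)]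
    · subst h; simp; norm_num
  have heq2 : Set.EqOn (fun z => G (z - a)) (fun z => 1 / 2 * Real.exp (-(z - a) / b))
      (Set.uIcc a n) := by
    intro z hz
    rw [Set.uIcc_of_le han] at hz
    show G (z - a) = _
    rw [hG, if_pos (by linarith [hz.1])]
  have hce : Continuous (fun z : ℝ => Real.exp ((z - a) / b)) :=
    Real.continuous_exp.comp ((continuous_id.sub continuous_const).div_const b)
  have hce' : Continuous (fun z : ℝ => Real.exp (-(z - a) / b)) :=
    Real.continuous_exp.comp (((continuous_id.sub continuous_const).neg).div_const b)
  have hc1 : Continuous (fun z : ℝ => 1 - 1 / 2 * Real.exp ((z - a) / b)) :=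
    continuous_const.sub (continuous_const.mul hce)
  have hc2 : Continuous (fun z : ℝ => 1 / 2 * Real.exp (-(z - a) / b)) :=
    continuous_const.mul hce'
  have hI1 : IntervalIntegrable (fun z => G (z - a)) MeasureTheory.volume 0 a := by
    refine (hc1.intervalIntegrable 0 a).congr ?_
    intro z hz
    exact (heq1 (Set.uIoc_subset_uIcc hz)).symm
  have hI2 : IntervalIntegrable (fun z => G (z - a)) MeasureTheory.volume a n := by
    refine (hc2.intervalIntegrable a n).congr ?_
    intro z hz
    exact (heq2 (Set.uIoc_subset_uIcc hz)).symm
  have hsplit : (∫ z in (0:ℝ)..n, G (z - a))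
      = (∫ z in (0:ℝ)..a, G (z - a)) + ∫ z in a..n, G (z - a) :=
    (intervalIntegral.integral_add_adjacent_intervals hI1 hI2).symm
  have e1 : (∫ z in (0:ℝ)..a, G (z - a))
      = ∫ z in (0:ℝ)..a, (1 - 1 / 2 * Real.exp ((z - a) / b)) :=
    intervalIntegral.integral_congr heq1
  have e2 : (∫ z in a..n, G (z - a))
      = ∫ z in a..n, (1 / 2 * Real.exp (-(z - a) / b)) :=
    intervalIntegral.integral_congr heq2
  have v1 : (∫ z in (0:ℝ)..a, (1 - 1 / 2 * Real.exp ((z - a) / b)))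
      = a - 1 / 2 * (b * (Real.exp ((a + -a) / b) - Real.exp ((0 + -a) / b))) := by
    rw [intervalIntegral.integral_sub (f := fun _ => (1:ℝ)) (g := fun z => 1 / 2 * Real.exp ((z - a) / b)) intervalIntegrable_const
      ((continuous_const.mul hce).intervalIntegrable 0 a),
      intervalIntegral.integral_const_mul]
    have h := exp_int_aux b 0 a (-a) hbne
    simp only [sub_eq_add_neg] at h ⊢
    rw [h]
    simp
  have v2 : (∫ z in a..n, (1 / 2 * Real.exp (-(z - a) / b)))
      = 1 / 2 * (b * (Real.exp ((-a + a) / b) - Real.exp ((-n + a) / b))) := by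
    have hcomp : Set.EqOn (fun z => 1 / 2 * Real.exp (-(z - a) / b))
        (fun z => 1 / 2 * Real.exp ((-z + a) / b)) (Set.uIcc a n) := by
      intro z _; show (1:ℝ) / 2 * _ = _; ring_nf
    rw [intervalIntegral.integral_congr hcomp, intervalIntegral.integral_const_mul]
    have hneg : (∫ z in a..n, Real.exp ((-z + a) / b))
        = ∫ z in (-n)..(-a), Real.exp ((z + a) / b) := by
      rw [← intervalIntegral.integral_comp_neg (fun z => Real.exp ((z + a) / b))]
    rw [hneg, exp_int_aux b (-n) (-a) a hbne]
  rw [hsplit, e1, e2, v1, v2]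
  have h1 : (a + -a) / b = 0 := by ring_nf
  have h2 : (-a + a) / b = 0 := by ring_nf
  have h3 : (0 + -a) / b = -a / b := by ring_nf
  have h4 : (-n + a) / b = (a - n) / b := by ring_nf
  rw [h1, h2, h3, h4, Real.exp_zero]
  ring
end
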